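/- Let x and y be (not necessarily distinct) vertices of a configurable graph H, let C = v1v2v3v4v5v1 be a cycle of length five, and let P = u1u2...u_p and Q = w1w2...w_q be paths with p, q ∈ {1,2}, where H, C, P, Q are pairwise disjoint. Let G be the graph with V(G) = V(H) ∪ V(C) ∪ V(P) ∪ V(Q) and E(G) = E(H) ∪ E(C) ∪ E(P) ∪ E(Q) ∪ {x u1, u_p v1, y w1, w_q v3}. Then G is configurable. -/

import Mathlib

open SimpleGraph

/-- `f` is a configuration on `G`. -/
def IsConfig {V : Type*} (G : SimpleGraph V) (f : V → Finset (Fin 5)) : Prop :=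
  (∀ v, (f v).card = 2) ∧
  ∀ (v : V) (c : Fin 5), ∃ u, (u = v ∨ G.Adj u v) ∧ c ∈ f u

/-- A graph is configurable if it admits a configuration. -/
def Configurable {V : Type*} (G : SimpleGraph V) : Prop :=
  ∃ f : V → Finset (Fin 5), IsConfig G f

/-- The graph obtained from the disjoint union of `H`, a 5-cycle `C` (on `ZMod 5`,
with `v_i` corresponding to `i - 1` and `a` adjacent to `a + 1`), a path
`P = u_1 … u_p` (on `Fin p`) and a path `Q = w_1 … w_q` (on `Fin q`) by adding the
four edges `x u_1`, `u_p v_1`, `y w_1` and `w_q v_3`. -/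
def c5TwoTails {W : Type*} (H : SimpleGraph W) (x y : W) (p q : ℕ) :
    SimpleGraph (W ⊕ ZMod 5 ⊕ Fin p ⊕ Fin q) :=
  SimpleGraph.fromEdgeSet
    ({e | ∃ a b, H.Adj a b ∧ e = s(Sum.inl a, Sum.inl b)} ∪
     {e | ∃ a : ZMod 5, e = s(Sum.inr (Sum.inl a), Sum.inr (Sum.inl (a + 1)))} ∪
     {e | ∃ i : ℕ, ∃ h : i + 1 < p,
        e = s(Sum.inr (Sum.inr (Sum.inl ⟨i, Nat.lt_of_succ_lt h⟩)),
              Sum.inr (Sum.inr (Sum.inl ⟨i + 1, h⟩)))} ∪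
     {e | ∃ i : ℕ, ∃ h : i + 1 < q,
        e = s(Sum.inr (Sum.inr (Sum.inr ⟨i, Nat.lt_of_succ_lt h⟩)),
              Sum.inr (Sum.inr (Sum.inr ⟨i + 1, h⟩)))} ∪
     {e | ∃ h : 0 < p, e = s(Sum.inl x, Sum.inr (Sum.inr (Sum.inl ⟨0, h⟩)))} ∪
     {e | ∃ h : 0 < p,
        e = s(Sum.inr (Sum.inr (Sum.inl ⟨p - 1, by omega⟩)), Sum.inr (Sum.inl 0))} ∪
     {e | ∃ h : 0 < q, e = s(Sum.inl y, Sum.inr (Sum.inr (Sum.inr ⟨0, h⟩)))} ∪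
     {e | ∃ h : 0 < q,
        e = s(Sum.inr (Sum.inr (Sum.inr ⟨q - 1, by omega⟩)), Sum.inr (Sum.inl 2))})

def pr (a : Fin 5) : Finset (Fin 5) := {a, a + 1}

def cyc (c : Fin 5) (i : ZMod 5) : Finset (Fin 5) := pr ((Fin.ofNat 5 (2 * i.val)) + c)

lemma pr_card : ∀ a : Fin 5, (pr a).card = 2 := by decide
lemma cyc_card : ∀ (c : Fin 5) (i : ZMod 5), (cyc c i).card = 2 := by decide
lemma cyc_cover : ∀ (c : Fin 5) (i : ZMod 5),
    cyc c (i - 1) ∪ cyc c i ∪ cyc c (i + 1) = Finset.univ := by decide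
lemma cyc_zero : ∀ c : Fin 5, cyc c 0 = pr c := by decide
lemma cyc_two : ∀ c : Fin 5, cyc c 2 = pr (c + 4) := by decide
lemma zmod_ne' : ∀ i : ZMod 5, i - 1 ≠ i := by decide


lemma keyc : ∀ (b1 b2 : Bool) (x1 x2 y1 y2 : Fin 5), x1 ≠ x2 → y1 ≠ y2 →
    ∃ c : Fin 5,
      ((b1 = true → (Finset.univ \ ({x1, x2} ∪ pr c)).card ≤ 2) ∧
       (b1 = false → (({x1, x2} : Finset (Fin 5)) ∩ pr c).Nonempty)) ∧
      ((b2 = true → (Finset.univ \ ({y1, y2} ∪ pr (c + 4))).card ≤ 2) ∧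
       (b2 = false → (({y1, y2} : Finset (Fin 5)) ∩ pr (c + 4)).Nonempty)) := by decide

lemma buildA {s t : Finset (Fin 5)} (h : (Finset.univ \ (s ∪ t)).card ≤ 2) :
    ∃ u : Finset (Fin 5), u.card = 2 ∧ s ∪ u ∪ t = Finset.univ := by
  obtain ⟨u, hsub, -, hcard⟩ :=
    Finset.exists_subsuperset_card_eq (Finset.subset_univ (Finset.univ \ (s ∪ t))) h
      (by simp [Finset.card_univ])
  refine ⟨u, hcard, ?_⟩
  apply Finset.eq_univ_of_forall
  intro a
  by_cases ha : a ∈ s ∪ t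
  · rcases Finset.mem_union.1 ha with h' | h'
    · exact Finset.mem_union_left _ (Finset.mem_union_left _ h')
    · exact Finset.mem_union_right _ h'
  · exact Finset.mem_union_left _ (Finset.mem_union_right _ (hsub (by simp [ha])))

lemma buildB {s t : Finset (Fin 5)} (h : (s ∩ t).Nonempty) :
    ∃ u1 u2 : Finset (Fin 5), u1.card = 2 ∧ u2.card = 2 ∧
      s ∪ u1 ∪ u2 = Finset.univ ∧ u1 ∪ u2 ∪ t = Finset.univ := by
  have hK : (Finset.univ \ (s ∩ t)).card ≤ 4 := by
    have h2 := Finset.card_sdiff_of_subset (Finset.subset_univ (s ∩ t))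
    have h1 : 1 ≤ (s ∩ t).card := Finset.one_le_card.2 h
    simp only [Finset.card_univ, Fintype.card_fin] at h2
    omega
  obtain ⟨K', hsub, -, hK'⟩ :=
    Finset.exists_subsuperset_card_eq (Finset.subset_univ (Finset.univ \ (s ∩ t))) hK
      (by simp [Finset.card_univ])
  obtain ⟨u1, hu1sub, hu1⟩ := Finset.exists_subset_card_eq (s := K') (n := 2) (by omega)
  refine ⟨u1, K' \ u1, hu1, ?_, ?_, ?_⟩
  · rw [Finset.card_sdiff_of_subset hu1sub, hK', hu1]
  · rw [Finset.union_assoc, Finset.union_sdiff_of_subset hu1sub]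
    apply Finset.eq_univ_of_forall
    intro a
    by_cases ha : a ∈ s
    · exact Finset.mem_union_left _ ha
    · exact Finset.mem_union_right _ (hsub (by simp [ha]))
  · rw [Finset.union_sdiff_of_subset hu1sub]
    apply Finset.eq_univ_of_forall
    intro a
    by_cases ha : a ∈ t
    · exact Finset.mem_union_right _ ha
    · exact Finset.mem_union_left _ (hsub (by simp [ha]))

lemma build {W : Type*} (H : SimpleGraph W) (f : W → Finset (Fin 5)) (hf : IsConfig H f)
    (x y : W) (p q : ℕ) (hp : p = 1 ∨ p = 2) (hq : q = 1 ∨ q = 2)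
    (c : Fin 5) (U1 U2 W1 W2 : Finset (Fin 5))
    (hU1 : U1.card = 2) (hU2 : U2.card = 2) (hW1 : W1.card = 2) (hW2 : W2.card = 2)
    (hP1 : p = 1 → f x ∪ U1 ∪ pr c = Finset.univ)
    (hP2 : p = 2 → f x ∪ U1 ∪ U2 = Finset.univ ∧ U1 ∪ U2 ∪ pr c = Finset.univ)
    (hQ1 : q = 1 → f y ∪ W1 ∪ pr (c + 4) = Finset.univ)
    (hQ2 : q = 2 → f y ∪ W1 ∪ W2 = Finset.univ ∧ W1 ∪ W2 ∪ pr (c + 4) = Finset.univ) :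
    Configurable (c5TwoTails H x y p q) := by
  classical
  set G := c5TwoTails H x y p q with hG
  refine ⟨fun v => match v with
    | .inl w => f w
    | .inr (.inl i) => cyc c i
    | .inr (.inr (.inl j)) => if j.val = 0 then U1 else U2
    | .inr (.inr (.inr k)) => if k.val = 0 then W1 else W2, ?_, ?_⟩
  · rintro (w | i | j | k)
    · exact hf.1 w
    · exact cyc_card c i
    · by_cases hj : j.val = 0 <;> simp [hj, hU1, hU2]
    · by_cases hk : k.val = 0 <;> simp [hk, hW1, hW2]
  · have adjCyc : ∀ a : ZMod 5, G.Adj (.inr (.inl a)) (.inr (.inl (a + 1))) := by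
      intro a
      rw [hG, c5TwoTails, fromEdgeSet_adj]
      constructor
      · simp only [Set.mem_union, Set.mem_setOf_eq]
        exact Or.inl (Or.inl (Or.inl (Or.inl (Or.inl (Or.inl (Or.inr ⟨a, rfl⟩))))))
      · simp only [ne_eq, Sum.inr.injEq, Sum.inl.injEq]
        have : a ≠ a + 1 := by revert a; decide
        exact this
    rintro (w | i | j | k) col
    · obtain ⟨u, hu, hcu⟩ := hf.2 w col
      refine ⟨.inl u, ?_, hcu⟩
      rcases hu with rfl | hadj
      · exact Or.inl rfl
      · refine Or.inr ?_
        rw [hG, c5TwoTails, fromEdgeSet_adj]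
        refine ⟨?_, ?_⟩
        · simp only [Set.mem_union, Set.mem_setOf_eq]
          exact Or.inl (Or.inl (Or.inl (Or.inl (Or.inl (Or.inl (Or.inl ⟨u, w, hadj, rfl⟩))))))
        · simp only [ne_eq, Sum.inl.injEq]
          exact hadj.ne
    · have hcol : col ∈ cyc c (i - 1) ∪ cyc c i ∪ cyc c (i + 1) := by
        rw [cyc_cover]; exact Finset.mem_univ _
      rcases Finset.mem_union.1 hcol with h' | h'
      · rcases Finset.mem_union.1 h' with h'' | h''
        · refine ⟨.inr (.inl (i - 1)), Or.inr ?_, h''⟩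
          have h2 := adjCyc (i - 1)
          rw [show i - 1 + 1 = i from by ring] at h2
          exact h2
        · exact ⟨.inr (.inl i), Or.inl rfl, h''⟩
      · exact ⟨.inr (.inl (i + 1)), Or.inr (adjCyc i).symm, h'⟩
    · rcases hp with rfl | rfl
      · -- p = 1
        have hj0 : j = ⟨0, Nat.one_pos⟩ := Subsingleton.elim _ _
        subst hj0
        have hcol : col ∈ f x ∪ U1 ∪ pr c := by rw [hP1 rfl]; exact Finset.mem_univ _
        rcases Finset.mem_union.1 hcol with h' | h'
        · rcases Finset.mem_union.1 h' with h'' | h''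
          · refine ⟨.inl x, Or.inr ?_, h''⟩
            rw [hG, c5TwoTails, fromEdgeSet_adj]
            refine ⟨?_, by simp⟩
            simp only [Set.mem_union, Set.mem_setOf_eq]
            exact Or.inl (Or.inl (Or.inl (Or.inr ⟨Nat.one_pos, trivial⟩)))
          · exact ⟨.inr (.inr (.inl ⟨0, Nat.one_pos⟩)), Or.inl rfl, by simpa using h''⟩
        · refine ⟨.inr (.inl 0), Or.inr ?_, ?_⟩
          · have h3 : G.Adj (.inr (.inr (.inl ⟨0, Nat.one_pos⟩))) (.inr (.inl 0)) := by
              rw [hG, c5TwoTails, fromEdgeSet_adj]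
              refine ⟨?_, by simp⟩
              simp only [Set.mem_union, Set.mem_setOf_eq]
              exact Or.inl (Or.inl (Or.inr ⟨Nat.one_pos, trivial⟩))
            exact h3.symm
          · show col ∈ cyc c 0
            rw [cyc_zero]; exact h'
      · -- p = 2
        obtain ⟨jv, hjv⟩ := j
        have hadj01 : G.Adj (.inr (.inr (.inl ⟨0, by norm_num⟩)))
            (.inr (.inr (.inl ⟨1, by norm_num⟩))) := by
          rw [hG, c5TwoTails, fromEdgeSet_adj]
          refine ⟨?_, by simp⟩
          simp only [Set.mem_union, Set.mem_setOf_eq]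
          exact Or.inl (Or.inl (Or.inl (Or.inl (Or.inl (Or.inr ⟨0, (by norm_num : (0:ℕ)+1 < 2), rfl⟩)))))
        interval_cases jv
        · have hcol : col ∈ f x ∪ U1 ∪ U2 := by rw [(hP2 rfl).1]; exact Finset.mem_univ _
          rcases Finset.mem_union.1 hcol with h' | h'
          · rcases Finset.mem_union.1 h' with h'' | h''
            · refine ⟨.inl x, Or.inr ?_, h''⟩
              rw [hG, c5TwoTails, fromEdgeSet_adj]
              refine ⟨?_, by simp⟩
              simp only [Set.mem_union, Set.mem_setOf_eq]
              exact Or.inl (Or.inl (Or.inl (Or.inr ⟨by norm_num, trivial⟩)))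
            · exact ⟨.inr (.inr (.inl ⟨0, by norm_num⟩)), Or.inl rfl, by simpa using h''⟩
          · exact ⟨.inr (.inr (.inl ⟨1, by norm_num⟩)), Or.inr hadj01.symm, by simpa using h'⟩
        · have hcol : col ∈ U1 ∪ U2 ∪ pr c := by rw [(hP2 rfl).2]; exact Finset.mem_univ _
          rcases Finset.mem_union.1 hcol with h' | h'
          · rcases Finset.mem_union.1 h' with h'' | h''
            · exact ⟨.inr (.inr (.inl ⟨0, by norm_num⟩)), Or.inr hadj01, by simpa using h''⟩
            · exact ⟨.inr (.inr (.inl ⟨1, by norm_num⟩)), Or.inl rfl, by simpa using h''⟩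
          · refine ⟨.inr (.inl 0), Or.inr ?_, ?_⟩
            · have h3 : G.Adj (.inr (.inr (.inl ⟨1, by norm_num⟩))) (.inr (.inl 0)) := by
                rw [hG, c5TwoTails, fromEdgeSet_adj]
                refine ⟨?_, by simp⟩
                simp only [Set.mem_union, Set.mem_setOf_eq]
                exact Or.inl (Or.inl (Or.inr ⟨by norm_num, trivial⟩))
              exact h3.symm
            · show col ∈ cyc c 0
              rw [cyc_zero]; exact h'
    · rcases hq with rfl | rfl
      · -- q = 1
        have hk0 : k = ⟨0, Nat.one_pos⟩ := Subsingleton.elim _ _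
        subst hk0
        have hcol : col ∈ f y ∪ W1 ∪ pr (c + 4) := by rw [hQ1 rfl]; exact Finset.mem_univ _
        rcases Finset.mem_union.1 hcol with h' | h'
        · rcases Finset.mem_union.1 h' with h'' | h''
          · refine ⟨.inl y, Or.inr ?_, h''⟩
            rw [hG, c5TwoTails, fromEdgeSet_adj]
            refine ⟨?_, by simp⟩
            simp only [Set.mem_union, Set.mem_setOf_eq]
            exact Or.inl (Or.inr ⟨Nat.one_pos, trivial⟩)
          · exact ⟨.inr (.inr (.inr ⟨0, Nat.one_pos⟩)), Or.inl rfl, by simpa using h''⟩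
        · refine ⟨.inr (.inl 2), Or.inr ?_, ?_⟩
          · have h3 : G.Adj (.inr (.inr (.inr ⟨0, Nat.one_pos⟩))) (.inr (.inl 2)) := by
              rw [hG, c5TwoTails, fromEdgeSet_adj]
              refine ⟨?_, by simp⟩
              simp only [Set.mem_union, Set.mem_setOf_eq]
              exact Or.inr ⟨Nat.one_pos, trivial⟩
            exact h3.symm
          · show col ∈ cyc c 2
            rw [cyc_two]; exact h'
      · -- q = 2
        obtain ⟨kv, hkv⟩ := k
        have hadj01 : G.Adj (.inr (.inr (.inr ⟨0, by norm_num⟩)))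
            (.inr (.inr (.inr ⟨1, by norm_num⟩))) := by
          rw [hG, c5TwoTails, fromEdgeSet_adj]
          refine ⟨?_, by simp⟩
          simp only [Set.mem_union, Set.mem_setOf_eq]
          exact Or.inl (Or.inl (Or.inl (Or.inl (Or.inr ⟨0, (by norm_num : (0:ℕ)+1 < 2), rfl⟩))))
        interval_cases kv
        · have hcol : col ∈ f y ∪ W1 ∪ W2 := by rw [(hQ2 rfl).1]; exact Finset.mem_univ _
          rcases Finset.mem_union.1 hcol with h' | h'
          · rcases Finset.mem_union.1 h' with h'' | h''
            · refine ⟨.inl y, Or.inr ?_, h''⟩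
              rw [hG, c5TwoTails, fromEdgeSet_adj]
              refine ⟨?_, by simp⟩
              simp only [Set.mem_union, Set.mem_setOf_eq]
              exact Or.inl (Or.inr ⟨by norm_num, trivial⟩)
            · exact ⟨.inr (.inr (.inr ⟨0, by norm_num⟩)), Or.inl rfl, by simpa using h''⟩
          · exact ⟨.inr (.inr (.inr ⟨1, by norm_num⟩)), Or.inr hadj01.symm, by simpa using h'⟩
        · have hcol : col ∈ W1 ∪ W2 ∪ pr (c + 4) := by rw [(hQ2 rfl).2]; exact Finset.mem_univ _
          rcases Finset.mem_union.1 hcol with h' | h'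
          · rcases Finset.mem_union.1 h' with h'' | h''
            · exact ⟨.inr (.inr (.inr ⟨0, by norm_num⟩)), Or.inr hadj01, by simpa using h''⟩
            · exact ⟨.inr (.inr (.inr ⟨1, by norm_num⟩)), Or.inl rfl, by simpa using h''⟩
          · refine ⟨.inr (.inl 2), Or.inr ?_, ?_⟩
            · have h3 : G.Adj (.inr (.inr (.inr ⟨1, by norm_num⟩))) (.inr (.inl 2)) := by
                rw [hG, c5TwoTails, fromEdgeSet_adj]
                refine ⟨?_, by simp⟩
                simp only [Set.mem_union, Set.mem_setOf_eq]
                exact Or.inr ⟨by norm_num, trivial⟩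
              exact h3.symm
            · show col ∈ cyc c 2
              rw [cyc_two]; exact h'

theorem stmt9 {W : Type*} (H : SimpleGraph W) (hH : Configurable H) (x y : W)
    (p q : ℕ) (hp : p = 1 ∨ p = 2) (hq : q = 1 ∨ q = 2) :
    Configurable (c5TwoTails H x y p q) := by
  obtain ⟨f, hf⟩ := hH
  obtain ⟨x1, x2, hx12, hfx⟩ := Finset.card_eq_two.1 (hf.1 x)
  obtain ⟨y1, y2, hy12, hfy⟩ := Finset.card_eq_two.1 (hf.1 y)
  rcases hp with rfl | rfl <;> rcases hq with rfl | rfl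
  · obtain ⟨c, hcx, hcy⟩ := keyc true true x1 x2 y1 y2 hx12 hy12
    obtain ⟨U1, hU1c, hU1⟩ := buildA (hcx.1 rfl)
    obtain ⟨W1, hW1c, hW1⟩ := buildA (hcy.1 rfl)
    exact build H f hf x y 1 1 (Or.inl rfl) (Or.inl rfl) c U1 U1 W1 W1 hU1c hU1c hW1c hW1c
      (fun _ => by rw [hfx]; exact hU1) (fun h => by omega)
      (fun _ => by rw [hfy]; exact hW1) (fun h => by omega)
  · obtain ⟨c, hcx, hcy⟩ := keyc true false x1 x2 y1 y2 hx12 hy12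
    obtain ⟨U1, hU1c, hU1⟩ := buildA (hcx.1 rfl)
    obtain ⟨W1, W2, hW1c, hW2c, hW1, hW2⟩ := buildB (hcy.2 rfl)
    exact build H f hf x y 1 2 (Or.inl rfl) (Or.inr rfl) c U1 U1 W1 W2 hU1c hU1c hW1c hW2c
      (fun _ => by rw [hfx]; exact hU1) (fun h => by omega)
      (fun h => by omega) (fun _ => ⟨by rw [hfy]; exact hW1, hW2⟩)
  · obtain ⟨c, hcx, hcy⟩ := keyc false true x1 x2 y1 y2 hx12 hy12
    obtain ⟨U1, U2, hU1c, hU2c, hU1, hU2⟩ := buildB (hcx.2 rfl)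
    obtain ⟨W1, hW1c, hW1⟩ := buildA (hcy.1 rfl)
    exact build H f hf x y 2 1 (Or.inr rfl) (Or.inl rfl) c U1 U2 W1 W1 hU1c hU2c hW1c hW1c
      (fun h => by omega) (fun _ => ⟨by rw [hfx]; exact hU1, hU2⟩)
      (fun _ => by rw [hfy]; exact hW1) (fun h => by omega)
  · obtain ⟨c, hcx, hcy⟩ := keyc false false x1 x2 y1 y2 hx12 hy12
    obtain ⟨U1, U2, hU1c, hU2c, hU1, hU2⟩ := buildB (hcx.2 rfl)
    obtain ⟨W1, W2, hW1c, hW2c, hW1, hW2⟩ := buildB (hcy.2 rfl)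
    exact build H f hf x y 2 2 (Or.inr rfl) (Or.inr rfl) c U1 U2 W1 W2 hU1c hU2c hW1c hW2c
      (fun h => by omega) (fun _ => ⟨by rw [hfx]; exact hU1, hU2⟩)
      (fun h => by omega) (fun _ => ⟨by rw [hfy]; exact hW1, hW2⟩)
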